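/- Let C be an equidistant linear [n,2]_q code of weight ω. For a nonzero codeword w ∈ C, let C_w = {u ∈ C : u = 0 or supp(u) = supp(w)}. Then C_w is a 1-dimensional 𝔽_q-subspace of C, and every 1-dimensional subspace of C is equal to C_w for some nonzero w ∈ C. -/

import Mathlib

/-- The support of a vector. -/
def suppOf {F : Type*} [Zero F] {n : ℕ} (v : Fin n → F) : Set (Fin n) :=
  {i | v i ≠ 0}

/-- **Section 5, discussion.** Let `C` be an equidistant linear `[n,2]_q` code of weight
`ω`. For a nonzero codeword `w`, `C_w = {u ∈ C : u = 0 or supp u = supp w}` is a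
1-dimensional subspace of `C`, and every 1-dimensional subspace of `C` arises this way. -/
theorem stmt_11 {F : Type*} [Field F] [Fintype F] {n : ℕ}
    (C : Submodule F (Fin n → F)) (ω : ℕ)
    (hdim : Module.finrank F ↥C = 2)
    (hequi : ∀ v ∈ C, v ≠ 0 → (suppOf v).ncard = ω) :
    (∀ w ∈ C, w ≠ 0 →
      ∃ D : Submodule F (Fin n → F), D ≤ C ∧ Module.finrank F ↥D = 1 ∧
        (D : Set (Fin n → F)) = {u | u ∈ C ∧ (u = 0 ∨ suppOf u = suppOf w)}) ∧
    (∀ D : Submodule F (Fin n → F), D ≤ C → Module.finrank F ↥D = 1 →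
      ∃ w ∈ C, w ≠ 0 ∧
        (D : Set (Fin n → F)) = {u | u ∈ C ∧ (u = 0 ∨ suppOf u = suppOf w)}) := by
  have key : ∀ w ∈ C, w ≠ 0 →
      (↑(Submodule.span F {w}) : Set (Fin n → F))
        = {u | u ∈ C ∧ (u = 0 ∨ suppOf u = suppOf w)} := by
    intro w hw hw0
    ext u
    simp only [SetLike.mem_coe, Submodule.mem_span_singleton, Set.mem_setOf_eq]
    constructor
    · rintro ⟨c, rfl⟩
      refine ⟨C.smul_mem c hw, ?_⟩
      rcases eq_or_ne c 0 with rfl | hc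
      · left; simp
      · right
        ext i
        simp [suppOf, hc]
    · rintro ⟨hu, rfl | hsupp⟩
      · exact ⟨0, by simp⟩
      · by_contra hns
        push_neg at hns
        obtain ⟨i, hi⟩ : ∃ i, w i ≠ 0 := by
          by_contra h; push_neg at h; exact hw0 (funext h)
        set c := u i / w i with hc
        set v := u - c • w with hv
        have hu0 : u ≠ 0 := by
          intro h
          have : w i = 0 := by
            have := hsupp
            have : i ∉ suppOf u := by simp [suppOf, h]
            rw [hsupp] at this
            simpa [suppOf] using this
          exact hi this
        have hvC : v ∈ C := C.sub_mem hu (C.smul_mem c hw)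
        have hv0 : v ≠ 0 := by
          intro h
          apply hns c
          rw [hv, sub_eq_zero] at h
          exact h.symm
        have hvi : v i = 0 := by
          simp only [hv, hc, Pi.sub_apply, Pi.smul_apply, smul_eq_mul]
          field_simp
          ring
        have hsub : suppOf v ⊂ suppOf w := by
          constructor
          · intro j hj
            simp only [suppOf, Set.mem_setOf_eq] at hj ⊢
            intro hwj
            apply hj
            have huj : u j = 0 := by
              by_contra h
              have : j ∈ suppOf w := hsupp ▸ (by simpa [suppOf] using h)
              exact this hwj
            simp [hv, huj, hwj]
          · intro hle
            have : v i ≠ 0 := hle (by simpa [suppOf] using hi)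
            exact this hvi
        have hlt : (suppOf v).ncard < (suppOf w).ncard :=
          Set.ncard_lt_ncard hsub (Set.toFinite _)
        rw [hequi v hvC hv0, hequi w hw hw0] at hlt
        exact lt_irrefl _ hlt
  constructor
  · intro w hw hw0
    refine ⟨Submodule.span F {w}, ?_, finrank_span_singleton hw0, key w hw hw0⟩
    rw [Submodule.span_le]
    simpa using hw
  · intro D hD hD1
    have hne : D ≠ ⊥ := by
      intro h
      rw [h] at hD1
      simp at hD1
    obtain ⟨w, hwD, hw0⟩ := Submodule.exists_mem_ne_zero_of_ne_bot hne
    have hwC : w ∈ C := hD hwD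
    have hspan : Submodule.span F {w} = D := by
      apply Submodule.eq_of_le_of_finrank_eq
      · rw [Submodule.span_le]; simpa using hwD
      · rw [finrank_span_singleton hw0, hD1]
    refine ⟨w, hwC, hw0, ?_⟩
    rw [← hspan]
    exact key w hwC hw0
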